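/- arXiv:0708.3177 — 7 statements merged into one kernel-verified Lean document; each statement's English description precedes it below -/
import Mathlib

section
/- Let (A(t))_{t∈ℕ} be a sequence of n×n nonnegative real matrices, each with strictly positive diagonal entries. For s ≤ t define the backward accumulation A(t,s) = A(t-1)·A(t-2)⋯A(s) (with A(s,s) the identity matrix). Then there exists a strictly increasing sequence of natural numbers 0 < t_0 < t_1 < t_2 < ⋯ such that for all i ∈ ℕ the matrices A(t_{i+1}, t_i) and A(t_1, t_0) have the same type, i.e., for all indices k, l: A(t_{i+1},t_i)_{kl} > 0 if and only if A(t_1,t_0)_{kl} > 0. -/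
/-- Backward accumulation `A(t,s) = A(t-1) ⬝ A(t-2) ⋯ A(s)` (identity for `s = t`). -/
def backAcc {n : ℕ} (A : ℕ → Matrix (Fin n) (Fin n) ℝ) (s t : ℕ) :
    Matrix (Fin n) (Fin n) ℝ :=
  (((List.range' s (t - s)).map A).reverse).prod

namespace BAAux

variable {n : ℕ} {A : ℕ → Matrix (Fin n) (Fin n) ℝ}

/-- Entrywise nonnegative. -/
def NN (B : Matrix (Fin n) (Fin n) ℝ) : Prop := ∀ i j, 0 ≤ B i j

/-- Positive diagonal. -/
def PD (B : Matrix (Fin n) (Fin n) ℝ) : Prop := ∀ i, 0 < B i i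

lemma NN.mul {B C : Matrix (Fin n) (Fin n) ℝ} (hB : NN B) (hC : NN C) : NN (B * C) := by
  intro i j
  rw [Matrix.mul_apply]
  exact Finset.sum_nonneg fun m _ => mul_nonneg (hB i m) (hC m j)

lemma mul_pos_left {B C : Matrix (Fin n) (Fin n) ℝ} (hB : NN B) (hBd : PD B)
    (hC : NN C) {k l : Fin n} (h : 0 < C k l) : 0 < (B * C) k l := by
  rw [Matrix.mul_apply]
  exact lt_of_lt_of_le (mul_pos (hBd k) h)
    (Finset.single_le_sum (fun m _ => mul_nonneg (hB k m) (hC m l)) (Finset.mem_univ k))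

lemma mul_pos_right {B C : Matrix (Fin n) (Fin n) ℝ} (hB : NN B) (hC : NN C) (hCd : PD C)
    {k l : Fin n} (h : 0 < B k l) : 0 < (B * C) k l := by
  rw [Matrix.mul_apply]
  exact lt_of_lt_of_le (mul_pos h (hCd l))
    (Finset.single_le_sum (fun m _ => mul_nonneg (hB k m) (hC m l)) (Finset.mem_univ l))

lemma prod_NN_PD (L : List (Matrix (Fin n) (Fin n) ℝ))
    (h : ∀ B ∈ L, NN B ∧ PD B) : NN L.prod ∧ PD L.prod := by
  induction L with
  | nil =>
      refine ⟨fun i j => ?_, fun i => ?_⟩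
      · simp only [List.prod_nil, Matrix.one_apply]
        split <;> norm_num
      · simp [Matrix.one_apply]
  | cons B L ih =>
      have hB := h B (List.mem_cons_self)
      have hL := ih (fun C hC => h C (List.mem_cons_of_mem _ hC))
      rw [List.prod_cons]
      refine ⟨hB.1.mul hL.1, fun i => ?_⟩
      rw [Matrix.mul_apply]
      exact lt_of_lt_of_le (mul_pos (hB.2 i) (hL.2 i))
        (Finset.single_le_sum (fun m _ => mul_nonneg (hB.1 i m) (hL.1 m i)) (Finset.mem_univ i))

lemma backAcc_NN_PD (hnonneg : ∀ t i j, 0 ≤ A t i j) (hdiag : ∀ t i, 0 < A t i i)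
    (s t : ℕ) : NN (backAcc A s t) ∧ PD (backAcc A s t) := by
  apply prod_NN_PD
  intro B hB
  simp only [List.mem_reverse, List.mem_map] at hB
  obtain ⟨u, _, rfl⟩ := hB
  exact ⟨fun i j => hnonneg u i j, fun i => hdiag u i⟩

lemma backAcc_one {s t : ℕ} (h : t ≤ s) : backAcc A s t = 1 := by
  unfold backAcc
  rw [Nat.sub_eq_zero_of_le h]
  simp

lemma backAcc_split {s t u : ℕ} (hst : s ≤ t) (htu : t ≤ u) :
    backAcc A s u = backAcc A t u * backAcc A s t := by
  unfold backAcc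
  have h1 : List.range' s (t - s) ++ List.range' t (u - t) = List.range' s (u - s) := by
    have h := @List.range'_append s (t - s) (u - t) 1
    rwa [show s + 1 * (t - s) = t by omega, show t - s + (u - t) = u - s by omega] at h
  rw [← h1, List.map_append, List.reverse_append, List.prod_append]

lemma mono_right (hnonneg : ∀ t i j, 0 ≤ A t i j) (hdiag : ∀ t i, 0 < A t i i)
    {s t u : ℕ} (h : t ≤ u) {k l : Fin n}
    (hpos : 0 < backAcc A s t k l) : 0 < backAcc A s u k l := by
  rcases le_or_gt s t with hst | hst
  · rw [backAcc_split hst h]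
    exact mul_pos_left (backAcc_NN_PD hnonneg hdiag t u).1 (backAcc_NN_PD hnonneg hdiag t u).2
      (backAcc_NN_PD hnonneg hdiag s t).1 hpos
  · rw [backAcc_one hst.le] at hpos
    have hkl : k = l := by
      by_contra hne
      rw [Matrix.one_apply_ne hne] at hpos
      exact lt_irrefl _ hpos
    subst hkl
    exact (backAcc_NN_PD hnonneg hdiag s u).2 k

lemma mono_left (hnonneg : ∀ t i j, 0 ≤ A t i j) (hdiag : ∀ t i, 0 < A t i i)
    {s t u : ℕ} (h : s ≤ t) {k l : Fin n}
    (hpos : 0 < backAcc A t u k l) : 0 < backAcc A s u k l := by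
  rcases le_or_gt t u with htu | htu
  · rw [backAcc_split h htu]
    exact mul_pos_right (backAcc_NN_PD hnonneg hdiag t u).1
      (backAcc_NN_PD hnonneg hdiag s t).1 (backAcc_NN_PD hnonneg hdiag s t).2 hpos
  · rw [backAcc_one htu.le] at hpos
    have hkl : k = l := by
      by_contra hne
      rw [Matrix.one_apply_ne hne] at hpos
      exact lt_irrefl _ hpos
    subst hkl
    exact (backAcc_NN_PD hnonneg hdiag s u).2 k

/-- Auxiliary recursively defined time sequence. -/
def seqT (s0 : ℕ) (T : ℕ → ℕ) : ℕ → ℕ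
  | 0 => s0 + 1
  | i + 1 => max (seqT s0 T i) (T (seqT s0 T i)) + 1

end BAAux

open BAAux in
/-- For a sequence of nonnegative matrices with positive diagonals, there is a strictly
increasing sequence `0 < t 0 < t 1 < ⋯` such that all backward accumulations
`A(t (i+1), t i)` have the same type (zero pattern) as `A(t 1, t 0)`. -/
theorem stmt0 {n : ℕ} (hn : 1 ≤ n) (A : ℕ → Matrix (Fin n) (Fin n) ℝ)
    (hnonneg : ∀ t i j, 0 ≤ A t i j) (hdiag : ∀ t i, 0 < A t i i) :
    ∃ t : ℕ → ℕ, StrictMono t ∧ 0 < t 0 ∧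
      ∀ i : ℕ, ∀ k l : Fin n,
        0 < backAcc A (t i) (t (i + 1)) k l ↔ 0 < backAcc A (t 0) (t 1) k l := by
  classical
  -- pattern of the accumulation on [s, t]
  set P : ℕ → ℕ → Finset (Fin n × Fin n) :=
    fun s t => Finset.univ.filter (fun p => 0 < backAcc A s t p.1 p.2) with hPdef
  have hPmem : ∀ s t p, p ∈ P s t ↔ 0 < backAcc A s t p.1 p.2 := by
    intro s t p; simp [hPdef]
  -- monotone in t
  have hPmono : ∀ s {t u}, t ≤ u → P s t ⊆ P s u := by
    intro s t u h p hp
    exact (hPmem s u p).2 (mono_right hnonneg hdiag h ((hPmem s t p).1 hp))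
  -- antitone in s
  have hPanti : ∀ {s s'} (t : ℕ), s ≤ s' → P s' t ⊆ P s t := by
    intro s s' t h p hp
    exact (hPmem s t p).2 (mono_left hnonneg hdiag h ((hPmem s' t p).1 hp))
  -- stabilization in t
  have hstab : ∀ s, ∃ T, ∀ t, T ≤ t → P s t = P s T := by
    intro s
    have hne : (Set.range fun t => (P s t).card).Nonempty := Set.range_nonempty _
    have hbdd : BddAbove (Set.range fun t => (P s t).card) := by
      refine ⟨Fintype.card (Fin n × Fin n), ?_⟩
      rintro c ⟨t, rfl⟩
      simpa using Finset.card_le_card (Finset.subset_univ (P s t))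
    obtain ⟨T, hT⟩ := Nat.sSup_mem hne hbdd
    refine ⟨T, fun t ht => ?_⟩
    have hsub : P s T ⊆ P s t := hPmono s ht
    have hT' : (P s T).card = sSup (Set.range fun t => (P s t).card) := hT
    have hle : (P s t).card ≤ (P s T).card := by
      rw [hT']
      exact le_csSup hbdd ⟨t, rfl⟩
    exact (Finset.eq_of_subset_of_card_le hsub hle).symm
  choose T hT using hstab
  -- the limit pattern for each start time
  set Q : ℕ → Finset (Fin n × Fin n) := fun s => P s (T s) with hQdef
  have hQstab : ∀ s t, T s ≤ t → P s t = Q s := fun s t ht => hT s t ht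
  have hQanti : ∀ {s s'}, s ≤ s' → Q s' ⊆ Q s := by
    intro s s' h
    have h1 : Q s' = P s' (max (T s) (T s')) := (hQstab s' _ (le_max_right _ _)).symm
    have h2 : Q s = P s (max (T s) (T s')) := (hQstab s _ (le_max_left _ _)).symm
    rw [h1, h2]
    exact hPanti _ h
  -- stabilization of Q
  have hne : (Set.range fun s => (Q s).card).Nonempty := Set.range_nonempty _
  obtain ⟨s0, hs0⟩ := Nat.sInf_mem hne
  have hQs0 : ∀ s, s0 ≤ s → Q s = Q s0 := by
    intro s hs
    have hsub : Q s ⊆ Q s0 := hQanti hs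
    have hs0' : (Q s0).card = sInf (Set.range fun s => (Q s).card) := hs0
    have hle : (Q s0).card ≤ (Q s).card := by
      rw [hs0']
      exact Nat.sInf_le ⟨s, rfl⟩
    exact Finset.eq_of_subset_of_card_le hsub hle
  -- the time sequence
  refine ⟨seqT s0 T, ?_, ?_, ?_⟩
  · apply strictMono_nat_of_lt_succ
    intro i
    have : seqT s0 T i ≤ max (seqT s0 T i) (T (seqT s0 T i)) := le_max_left _ _
    simpa [seqT] using Nat.lt_succ_of_le this
  · simp [seqT]
  · have hge : ∀ i, s0 ≤ seqT s0 T i := by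
      intro i
      induction i with
      | zero => simp [seqT]
      | succ i ih =>
          have : seqT s0 T i ≤ max (seqT s0 T i) (T (seqT s0 T i)) := le_max_left _ _
          simp only [seqT]
          omega
    have hblock : ∀ i, P (seqT s0 T i) (seqT s0 T (i + 1)) = Q s0 := by
      intro i
      have h1 : T (seqT s0 T i) ≤ seqT s0 T (i + 1) := by
        have : T (seqT s0 T i) ≤ max (seqT s0 T i) (T (seqT s0 T i)) := le_max_right _ _
        simp only [seqT]
        omega
      rw [hQstab _ _ h1, hQs0 _ (hge i)]
    intro i k l
    have h1 := hblock i
    have h2 := hblock 0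
    constructor
    · intro h
      have : (k, l) ∈ P (seqT s0 T 0) (seqT s0 T 1) := by
        rw [h2, ← h1, hPmem]
        exact h
      exact (hPmem _ _ (k, l)).1 this
    · intro h
      have : (k, l) ∈ P (seqT s0 T i) (seqT s0 T (i + 1)) := by
        rw [h1, ← h2, hPmem]
        exact h
      exact (hPmem _ _ (k, l)).1 this
end

section
/- Let (A(t))_{t∈ℕ} be a sequence of n×n nonnegative real matrices, each with strictly positive diagonal entries. For s ≤ t define the forward accumulation A(s,t) = A(s)·A(s+1)⋯A(t-1) (with A(s,s) the identity matrix). Then there exists a strictly increasing sequence of natural numbers 0 < s_0 < s_1 < s_2 < ⋯ such that for all i ∈ ℕ the matrices A(s_i, s_{i+1}) and A(s_0, s_1) have the same type, i.e., for all indices k, l: A(s_i,s_{i+1})_{kl} > 0 if and only if A(s_0,s_1)_{kl} > 0. -/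
/-- Forward accumulation `A(s,t) = A(s) ⬝ A(s+1) ⋯ A(t-1)` (identity for `s = t`). -/
def fwdAcc {n : ℕ} (A : ℕ → Matrix (Fin n) (Fin n) ℝ) (s t : ℕ) :
    Matrix (Fin n) (Fin n) ℝ :=
  ((List.range' s (t - s)).map A).prod

lemma fwdAcc_succ {n : ℕ} (A : ℕ → Matrix (Fin n) (Fin n) ℝ) {s t : ℕ} (h : s ≤ t) :
    fwdAcc A s (t + 1) = fwdAcc A s t * A t := by
  unfold fwdAcc
  rw [Nat.succ_sub h, List.range'_concat, List.map_append, List.prod_append]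
  simp [Nat.add_sub_cancel' h]

lemma listProd_nonneg {n : ℕ} :
    ∀ (l : List (Matrix (Fin n) (Fin n) ℝ)), (∀ B ∈ l, ∀ i j, 0 ≤ B i j) →
    ∀ i j, 0 ≤ l.prod i j := by
  intro l
  induction l with
  | nil =>
    intro _ i j
    simp only [List.prod_nil, Matrix.one_apply]
    split <;> norm_num
  | cons B l ih =>
    intro h i j
    simp only [List.prod_cons, Matrix.mul_apply]
    refine Finset.sum_nonneg fun m _ => mul_nonneg ?_ ?_
    · exact h B List.mem_cons_self i m
    · exact ih (fun C hC => h C (List.mem_cons_of_mem _ hC)) m j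

lemma fwdAcc_nonneg {n : ℕ} (A : ℕ → Matrix (Fin n) (Fin n) ℝ)
    (hnonneg : ∀ t i j, 0 ≤ A t i j) (s t : ℕ) (i j : Fin n) :
    0 ≤ fwdAcc A s t i j := by
  apply listProd_nonneg
  intro B hB i j
  obtain ⟨u, _, rfl⟩ := List.mem_map.mp hB
  exact hnonneg u i j

/-- Positivity of an entry is preserved when multiplying on the right. -/
lemma fwdAcc_pos_mono {n : ℕ} (A : ℕ → Matrix (Fin n) (Fin n) ℝ)
    (hnonneg : ∀ t i j, 0 ≤ A t i j) (hdiag : ∀ t i, 0 < A t i i)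
    {s t t' : ℕ} (hst : s ≤ t) (htt' : t ≤ t') {k l : Fin n}
    (h : 0 < fwdAcc A s t k l) : 0 < fwdAcc A s t' k l := by
  induction t', htt' using Nat.le_induction with
  | base => exact h
  | succ m hm ih =>
    rw [fwdAcc_succ A (hst.trans hm)]
    rw [Matrix.mul_apply]
    refine Finset.sum_pos' (fun c _ => mul_nonneg (fwdAcc_nonneg A hnonneg _ _ _ _)
      (hnonneg _ _ _)) ⟨l, Finset.mem_univ l, mul_pos ih (hdiag m l)⟩

open Classical in
/-- For a sequence of nonnegative matrices with positive diagonals, there is a strictly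
increasing sequence `0 < s 0 < s 1 < ⋯` such that all forward accumulations
`A(s i, s (i+1))` have the same type (zero pattern) as `A(s 0, s 1)`. -/
theorem stmt1 {n : ℕ} (hn : 1 ≤ n) (A : ℕ → Matrix (Fin n) (Fin n) ℝ)
    (hnonneg : ∀ t i j, 0 ≤ A t i j) (hdiag : ∀ t i, 0 < A t i i) :
    ∃ s : ℕ → ℕ, StrictMono s ∧ 0 < s 0 ∧
      ∀ i : ℕ, ∀ k l : Fin n,
        0 < fwdAcc A (s i) (s (i + 1)) k l ↔ 0 < fwdAcc A (s 0) (s 1) k l := by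
  classical
  -- the eventual positivity pattern starting at `s`
  set U : ℕ → Set (Fin n × Fin n) :=
    fun s => {p | ∃ t, s ≤ t ∧ 0 < fwdAcc A s t p.1 p.2} with hU
  -- a stabilization time
  set T : ℕ → ℕ := fun s => max s <| Finset.univ.sup fun p : Fin n × Fin n =>
    if h : ∃ t, s ≤ t ∧ 0 < fwdAcc A s t p.1 p.2 then h.choose else s with hT
  have hTs : ∀ s, s ≤ T s := fun s => le_max_left _ _
  have hstab : ∀ s t, T s ≤ t → ∀ k l : Fin n,
      (0 < fwdAcc A s t k l ↔ (k, l) ∈ U s) := by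
    intro s t ht k l
    constructor
    · intro h
      exact ⟨t, (hTs s).trans ht, h⟩
    · rintro ⟨u, hsu, hu⟩
      have hex : ∃ t, s ≤ t ∧ 0 < fwdAcc A s t (k, l).1 (k, l).2 := ⟨u, hsu, hu⟩
      have h1 := hex.choose_spec
      have h2 : (if h : ∃ t, s ≤ t ∧ 0 < fwdAcc A s t (k, l).1 (k, l).2
          then h.choose else s) ≤ T s := by
        refine le_trans ?_ (le_max_right _ _)
        exact Finset.le_sup (f := fun p : Fin n × Fin n =>
          if h : ∃ t, s ≤ t ∧ 0 < fwdAcc A s t p.1 p.2 then h.choose else s)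
          (Finset.mem_univ (k, l))
      rw [dif_pos hex] at h2
      exact fwdAcc_pos_mono A hnonneg hdiag h1.1 (h2.trans ht) h1.2
  -- pigeonhole: some pattern occurs for infinitely many starting times
  obtain ⟨P, hP⟩ := Finite.exists_infinite_fiber U
  have hPinf : (U ⁻¹' {P}).Infinite := Set.infinite_coe_iff.mp hP
  have hgt : ∀ N : ℕ, ∃ m, N < m ∧ U m = P := by
    intro N
    obtain ⟨m, hm, hNm⟩ := hPinf.exists_gt N
    exact ⟨m, hNm, hm⟩
  -- construct the sequence
  set s : ℕ → ℕ := fun i =>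
    Nat.rec (hgt 0).choose (fun _ prev => (hgt (T prev)).choose) i with hs
  have hs0 : s 0 = (hgt 0).choose := rfl
  have hssucc : ∀ i, s (i + 1) = (hgt (T (s i))).choose := fun i => rfl
  have hsP : ∀ i, U (s i) = P := by
    intro i
    cases i with
    | zero => exact (hgt 0).choose_spec.2
    | succ j => rw [hssucc j]; exact (hgt (T (s j))).choose_spec.2
  have hsT : ∀ i, T (s i) < s (i + 1) := by
    intro i
    rw [hssucc i]
    exact (hgt (T (s i))).choose_spec.1
  have hmono : StrictMono s :=
    strictMono_nat_of_lt_succ fun i => lt_of_le_of_lt (hTs (s i)) (hsT i)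
  refine ⟨s, hmono, ?_, ?_⟩
  · rw [hs0]; exact (hgt 0).choose_spec.1
  · intro i k l
    rw [hstab (s i) (s (i + 1)) (hsT i).le k l,
      hstab (s 0) (s 1) (hsT 0).le k l, hsP i, hsP 0]
end

section
/- Let (A(t))_{t∈ℕ} be a sequence of n×n nonnegative real matrices with strictly positive diagonals, and let 0 < t_0 < t_1 < ⋯ be a strictly increasing sequence such that all backward accumulations B_i := A(t_{i+1},t_i) have the same type as B_0 and, moreover, no further increase of positivity is possible: for every i and all indices k,l, (B_{i+1}·B_i)_{kl} > 0 ⟺ (B_0)_{kl} > 0. Then: (1) for any two indices k, l that communicate in B_0 (i.e., there is a path k → l and a path l → k in B_0), the entry (B_i)_{kl} is positive for every i; and (2) for any two communication classes I, J of B_0, the block of B_i with rows in J and columns in I is either entirely positive or entirely zero, uniformly in i. -/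
/-- There is a path `i → j` in the nonnegative matrix `B`:
a finite sequence of indices starting at `i` and ending at `j` along which the
corresponding entries of `B` are positive. -/
def PathTo {n : ℕ} (B : Matrix (Fin n) (Fin n) ℝ) (i j : Fin n) : Prop :=
  Relation.ReflTransGen (fun k l => 0 < B k l) i j

/-- Indices `i` and `j` communicate in `B`: there is a path `i → j` and a path `j → i`. -/
def Communicates {n : ℕ} (B : Matrix (Fin n) (Fin n) ℝ) (i j : Fin n) : Prop :=
  PathTo B i j ∧ PathTo B j i

lemma listProdNonneg {n : ℕ} (L : List (Matrix (Fin n) (Fin n) ℝ))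
    (h : ∀ M ∈ L, ∀ i j, 0 ≤ M i j) : ∀ i j, 0 ≤ L.prod i j := by
  induction L with
  | nil =>
    intro i j
    by_cases hij : i = j <;> simp [Matrix.one_apply, hij]
  | cons M L ih =>
    intro i j
    rw [List.prod_cons, Matrix.mul_apply]
    apply Finset.sum_nonneg
    intro k _
    exact mul_nonneg (h M (by simp) i k) (ih (fun N hN => h N (by simp [hN])) k j)

lemma listProdDiagPos {n : ℕ} (L : List (Matrix (Fin n) (Fin n) ℝ))
    (h : ∀ M ∈ L, ∀ i j, 0 ≤ M i j) (h2 : ∀ M ∈ L, ∀ i, 0 < M i i) :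
    ∀ i, 0 < L.prod i i := by
  induction L with
  | nil => intro i; simp [Matrix.one_apply]
  | cons M L ih =>
    intro i
    rw [List.prod_cons, Matrix.mul_apply]
    apply Finset.sum_pos'
    · intro k _
      exact mul_nonneg (h M (by simp) i k)
        (listProdNonneg L (fun N hN => h N (by simp [hN])) k i)
    · exact ⟨i, Finset.mem_univ i,
        mul_pos (h2 M (by simp) i)
          (ih (fun N hN => h N (by simp [hN])) (fun N hN => h2 N (by simp [hN])) i)⟩

/-- If all accumulations `B i := A(t (i+1), t i)` have the same type as `B 0` and no
further increase of positivity is possible (multiplying two consecutive accumulations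
does not create new positive entries), then (1) entries corresponding to communicating
pairs of indices of `B 0` are positive in every `B i`, and (2) for any two communication
classes `I` (the class of `l₀`) and `J` (the class of `k₀`) of `B 0`, the `(J, I)`-block
of `B i` is entirely positive or entirely zero, uniformly in `i`. -/
theorem stmt2 {n : ℕ} (A : ℕ → Matrix (Fin n) (Fin n) ℝ)
    (hnonneg : ∀ t i j, 0 ≤ A t i j) (hdiag : ∀ t i, 0 < A t i i)
    (t : ℕ → ℕ) (ht : StrictMono t) (ht0 : 0 < t 0)
    (B : ℕ → Matrix (Fin n) (Fin n) ℝ)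
    (hB : ∀ i, B i = backAcc A (t i) (t (i + 1)))
    (htype : ∀ i, ∀ k l : Fin n, 0 < B i k l ↔ 0 < B 0 k l)
    (hmax : ∀ i, ∀ k l : Fin n, 0 < (B (i + 1) * B i) k l ↔ 0 < B 0 k l) :
    (∀ k l : Fin n, Communicates (B 0) k l → ∀ i, 0 < B i k l) ∧
    (∀ k₀ l₀ : Fin n,
      (∀ i, ∀ k l : Fin n, Communicates (B 0) k₀ k → Communicates (B 0) l₀ l →
        0 < B i k l) ∨
      (∀ i, ∀ k l : Fin n, Communicates (B 0) k₀ k → Communicates (B 0) l₀ l →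
        B i k l = 0)) := by

  have hBnn : ∀ i k l, 0 ≤ B i k l := by
    intro i k l
    rw [hB i, backAcc]
    exact listProdNonneg _ (by
      intro M hM
      simp only [List.mem_reverse, List.mem_map] at hM
      obtain ⟨s, _, rfl⟩ := hM
      exact hnonneg s) k l
  have hBdiag : ∀ i k, 0 < B i k k := by
    intro i k
    rw [hB i, backAcc]
    refine listProdDiagPos _ ?_ ?_ k <;>
    · intro M hM
      simp only [List.mem_reverse, List.mem_map] at hM
      obtain ⟨s, _, rfl⟩ := hM
      first
      | exact hnonneg s
      | exact hdiag s
  have htrans : ∀ k m l : Fin n, 0 < B 0 k m → 0 < B 0 m l → 0 < B 0 k l := by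
    intro k m l h1 h2
    rw [← hmax 0, Matrix.mul_apply]
    apply Finset.sum_pos'
    · intro j _
      exact mul_nonneg (hBnn 1 k j) (hBnn 0 j l)
    · exact ⟨m, Finset.mem_univ m, mul_pos ((htype 1 k m).mpr h1) h2⟩
  have hpath : ∀ k l : Fin n, PathTo (B 0) k l → 0 < B 0 k l := by
    intro k l h
    induction h with
    | refl => exact hBdiag 0 k
    | tail _ h2 ih => exact htrans _ _ _ ih h2
  constructor
  · intro k l hc i
    exact (htype i k l).mpr (hpath k l hc.1)
  · intro k₀ l₀
    by_cases h : 0 < B 0 k₀ l₀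
    · left
      intro i k l hk hl
      exact (htype i k l).mpr
        (htrans _ _ _ (hpath _ _ hk.2) (htrans _ _ _ h (hpath _ _ hl.1)))
    · right
      intro i k l hk hl
      by_contra hne
      have hpos : 0 < B i k l := lt_of_le_of_ne (hBnn i k l) (Ne.symm hne)
      exact h (htrans _ _ _ (hpath _ _ hk.1)
        (htrans _ _ _ ((htype i k l).mp hpos) (hpath _ _ hl.2)))
end

section
/- Let A and B be n×n row-stochastic matrices. Then the coefficient of ergodicity is submultiplicative: τ(A·B) ≤ τ(A)·τ(B). -/
/-- Coefficient of ergodicity of a row-stochastic matrix: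
`τ(A) = 1 - min_{i,j} ∑ₖ min (A i k) (A j k)`. -/
noncomputable def ergCoeff {n : ℕ} (A : Matrix (Fin n) (Fin n) ℝ) : ℝ :=
  1 - sInf {x : ℝ | ∃ i j : Fin n, x = ∑ k, min (A i k) (A j k)}

lemma sum_min_eq' {n : ℕ} (f g : Fin n → ℝ) (hf : ∑ k, f k = 1) (hg : ∑ k, g k = 1) :
    ∑ k, min (f k) (g k) = 1 - (∑ k, |f k - g k|) / 2 := by
  have h : ∀ k, min (f k) (g k) = (f k + g k - |f k - g k|) / 2 := by
    intro k; rcases le_total (f k) (g k) with h | h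
    · rw [min_eq_left h, abs_of_nonpos (by linarith)]; ring
    · rw [min_eq_right h, abs_of_nonneg (by linarith)]; ring
  simp_rw [h]
  rw [← Finset.sum_div, Finset.sum_sub_distrib, Finset.sum_add_distrib, hf, hg]
  ring

/-- The coefficient of ergodicity is submultiplicative on row-stochastic matrices:
`τ(A·B) ≤ τ(A)·τ(B)`. -/
theorem stmt9 {n : ℕ} (hn : 1 ≤ n) (A B : Matrix (Fin n) (Fin n) ℝ)
    (hAnonneg : ∀ i j, 0 ≤ A i j) (hArowsum : ∀ i, ∑ j, A i j = 1)
    (hBnonneg : ∀ i j, 0 ≤ B i j) (hBrowsum : ∀ i, ∑ j, B i j = 1) :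
    ergCoeff (A * B) ≤ ergCoeff A * ergCoeff B := by
  have i0 : Fin n := ⟨0, hn⟩
  have hABrowsum : ∀ i, ∑ k, (A * B) i k = 1 := by
    intro i
    simp_rw [Matrix.mul_apply]
    rw [Finset.sum_comm]
    simp_rw [← Finset.mul_sum, hBrowsum, mul_one]
    exact hArowsum i
  -- boundedness and basic bounds for A and B sets
  have hbdd : ∀ (M : Matrix (Fin n) (Fin n) ℝ), (∀ i j, 0 ≤ M i j) →
      BddBelow {x : ℝ | ∃ i j : Fin n, x = ∑ k, min (M i k) (M j k)} := by
    intro M hM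
    refine ⟨0, ?_⟩
    rintro x ⟨i, j, rfl⟩
    exact Finset.sum_nonneg fun k _ => le_min (hM i k) (hM j k)
  have hinfle : ∀ (M : Matrix (Fin n) (Fin n) ℝ), (∀ i j, 0 ≤ M i j) → ∀ i j : Fin n,
      sInf {x : ℝ | ∃ i j : Fin n, x = ∑ k, min (M i k) (M j k)} ≤ ∑ k, min (M i k) (M j k) :=
    fun M hM i j => csInf_le (hbdd M hM) ⟨i, j, rfl⟩
  set τA := ergCoeff A with hτA
  set τB := ergCoeff B with hτB
  have habsA : ∀ i j, ∑ k, |A i k - A j k| ≤ 2 * τA := by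
    intro i j
    have h1 := hinfle A hAnonneg i j
    rw [sum_min_eq' _ _ (hArowsum i) (hArowsum j)] at h1
    simp only [hτA, ergCoeff] at *
    linarith
  have habsB : ∀ i j, ∑ k, |B i k - B j k| ≤ 2 * τB := by
    intro i j
    have h1 := hinfle B hBnonneg i j
    rw [sum_min_eq' _ _ (hBrowsum i) (hBrowsum j)] at h1
    simp only [hτB, ergCoeff] at *
    linarith
  have hτAnn : 0 ≤ τA := by
    have h2 : (0:ℝ) ≤ ∑ k, |A i0 k - A i0 k| := Finset.sum_nonneg fun k _ => abs_nonneg _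
    linarith [habsA i0 i0]
  have hτBnn : 0 ≤ τB := by
    have h2 : (0:ℝ) ≤ ∑ k, |B i0 k - B i0 k| := Finset.sum_nonneg fun k _ => abs_nonneg _
    linarith [habsB i0 i0]
  -- main goal
  rw [ergCoeff, sub_le_iff_le_add, ← sub_le_iff_le_add']
  refine le_csInf ⟨∑ k, min ((A*B) i0 k) ((A*B) i0 k), i0, i0, rfl⟩ ?_
  rintro x ⟨i, j, rfl⟩
  rw [sum_min_eq' _ _ (hABrowsum i) (hABrowsum j)]
  have key : ∑ k, |(A * B) i k - (A * B) j k| ≤ 2 * (τA * τB) := by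
    set d : Fin n → ℝ := fun l => A i l - A j l with hd
    have hdsum : ∑ l, d l = 0 := by
      simp only [hd]
      rw [Finset.sum_sub_distrib, hArowsum, hArowsum]; ring
    set δ : ℝ := (∑ l, |d l|) / 2 with hδ
    have hδnn : 0 ≤ δ := by
      have : (0:ℝ) ≤ ∑ l, |d l| := Finset.sum_nonneg fun l _ => abs_nonneg _
      linarith
    have hδA : δ ≤ τA := by
      have := habsA i j
      simp only [hδ, hd]
      linarith
    have hentry : ∀ k, (A * B) i k - (A * B) j k = ∑ l, d l * B l k := by
      intro k
      rw [Matrix.mul_apply, Matrix.mul_apply, ← Finset.sum_sub_distrib]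
      exact Finset.sum_congr rfl fun l _ => by simp [hd]; ring
    simp_rw [hentry]
    rcases eq_or_lt_of_le hδnn with hδ0 | hδpos
    · -- δ = 0, so d = 0
      have hsum0 : ∑ l, |d l| = 0 := by simp only [hδ] at hδ0; linarith
      have hdz : ∀ l ∈ Finset.univ, |d l| = 0 :=
        (Finset.sum_eq_zero_iff_of_nonneg fun l _ => abs_nonneg _).1 hsum0
      have hdz' : ∀ l, d l = 0 := fun l => abs_eq_zero.1 (hdz l (Finset.mem_univ l))
      have : ∀ k : Fin n, ∑ l, d l * B l k = 0 := by
        intro k; apply Finset.sum_eq_zero; intro l _; rw [hdz' l, zero_mul]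
      simp_rw [this]
      simp
      positivity
    · -- δ > 0
      set p : Fin n → ℝ := fun l => max (d l) 0 with hp
      set q : Fin n → ℝ := fun l => max (-(d l)) 0 with hq
      have hpnn : ∀ l, 0 ≤ p l := fun l => le_max_right _ _
      have hqnn : ∀ l, 0 ≤ q l := fun l => le_max_right _ _
      have hpq_sub : ∀ l, p l - q l = d l := by
        intro l; rcases le_total (d l) 0 with h | h
        · simp [hp, hq, max_eq_right h, max_eq_left (by linarith : (0:ℝ) ≤ -d l)]
        · simp [hp, hq, max_eq_left h, max_eq_right (by linarith : -d l ≤ (0:ℝ))]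
      have hpq_add : ∀ l, p l + q l = |d l| := by
        intro l; rcases le_total (d l) 0 with h | h
        · rw [abs_of_nonpos h]
          simp [hp, hq, max_eq_right h, max_eq_left (by linarith : (0:ℝ) ≤ -d l)]
        · rw [abs_of_nonneg h]
          simp [hp, hq, max_eq_left h, max_eq_right (by linarith : -d l ≤ (0:ℝ))]
      have hsump : ∑ l, p l = δ := by
        have h1 : ∑ l, (p l - q l) = 0 := by simp_rw [hpq_sub]; exact hdsum
        have h2 : ∑ l, (p l + q l) = 2 * δ := by simp_rw [hpq_add]; simp [hδ]; ring
        rw [Finset.sum_sub_distrib] at h1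
        rw [Finset.sum_add_distrib] at h2
        linarith
      have hsumq : ∑ l, q l = δ := by
        have h1 : ∑ l, (p l - q l) = 0 := by simp_rw [hpq_sub]; exact hdsum
        have h2 : ∑ l, (p l + q l) = 2 * δ := by simp_rw [hpq_add]; simp [hδ]; ring
        rw [Finset.sum_sub_distrib] at h1
        rw [Finset.sum_add_distrib] at h2
        linarith
      have hδne : δ ≠ 0 := ne_of_gt hδpos
      have keyk : ∀ k, ∑ l, d l * B l k =
          (∑ a, ∑ b, p a * q b * (B a k - B b k)) / δ := by
        intro k
        have e1 : ∑ a, ∑ b, p a * q b * (B a k - B b k)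
            = (∑ a, p a * B a k) * (∑ b, q b) - (∑ a, p a) * (∑ b, q b * B b k) := by
          rw [Finset.sum_mul_sum, Finset.sum_mul_sum]
          rw [← Finset.sum_sub_distrib]
          refine Finset.sum_congr rfl fun a _ => ?_
          rw [← Finset.sum_sub_distrib]
          refine Finset.sum_congr rfl fun b _ => ?_
          ring
        rw [e1, hsump, hsumq]
        have e2 : ∑ l, d l * B l k = (∑ a, p a * B a k) - (∑ a, q a * B a k) := by
          rw [← Finset.sum_sub_distrib]
          refine Finset.sum_congr rfl fun l _ => ?_
          rw [← hpq_sub l]; ring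
        rw [e2]
        field_simp
      calc ∑ k, |∑ l, d l * B l k|
          ≤ ∑ k, (∑ a, ∑ b, p a * q b * |B a k - B b k|) / δ := by
            refine Finset.sum_le_sum fun k _ => ?_
            rw [keyk k, abs_div, abs_of_pos hδpos]
            gcongr
            calc |∑ a, ∑ b, p a * q b * (B a k - B b k)|
                ≤ ∑ a, |∑ b, p a * q b * (B a k - B b k)| := Finset.abs_sum_le_sum_abs _ _
              _ ≤ ∑ a, ∑ b, |p a * q b * (B a k - B b k)| :=
                  Finset.sum_le_sum fun a _ => Finset.abs_sum_le_sum_abs _ _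
              _ = ∑ a, ∑ b, p a * q b * |B a k - B b k| := by
                  refine Finset.sum_congr rfl fun a _ => Finset.sum_congr rfl fun b _ => ?_
                  rw [abs_mul, abs_mul, abs_of_nonneg (hpnn a), abs_of_nonneg (hqnn b)]
        _ = (∑ a, ∑ b, p a * q b * ∑ k, |B a k - B b k|) / δ := by
            rw [← Finset.sum_div]
            congr 1
            rw [Finset.sum_comm]
            refine Finset.sum_congr rfl fun a _ => ?_
            rw [Finset.sum_comm]
            refine Finset.sum_congr rfl fun b _ => ?_
            rw [← Finset.mul_sum]
        _ ≤ (∑ a, ∑ b, p a * q b * (2 * τB)) / δ := by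
            gcongr with a _ b _
            · exact habsB a b
        _ = δ * (2 * τB) := by
            have e3 : ∑ a, ∑ b, p a * q b * (2 * τB)
                = (∑ a, p a) * (∑ b, q b) * (2 * τB) := by
              rw [Finset.sum_mul_sum, Finset.sum_mul]
              exact Finset.sum_congr rfl fun a _ => by rw [Finset.sum_mul]
            rw [e3, hsump, hsumq]
            field_simp
        _ ≤ 2 * (τA * τB) := by nlinarith
  linarith [key]
end

section
/- Let (A_i)_{i∈ℕ} be a sequence of n×n row-stochastic matrices and (δ_i)_{i∈ℕ} real numbers with 0 ≤ δ_i ≤ 1, τ(A_i) ≤ 1 − δ_i for all i, and ∑_{i=0}^∞ δ_i = ∞. Then the coefficients of ergodicity of the backward products converge to zero: lim_{i→∞} τ(A_i ⋯ A_1 A_0) = 0. -/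
open Filter Topology

section lemmas
variable {n : ℕ}

def ErgStoch (A : Matrix (Fin n) (Fin n) ℝ) : Prop :=
  (∀ i j, 0 ≤ A i j) ∧ ∀ i, ∑ j, A i j = 1

lemma ergSet_bddBelow {A : Matrix (Fin n) (Fin n) ℝ} (hA : ErgStoch A) :
    BddBelow {x : ℝ | ∃ i j : Fin n, x = ∑ k, min (A i k) (A j k)} := by
  refine ⟨0, ?_⟩
  rintro x ⟨i, j, rfl⟩
  exact Finset.sum_nonneg fun k _ => le_min (hA.1 i k) (hA.1 j k)

lemma erg_nonneg (hn : 1 ≤ n) {A : Matrix (Fin n) (Fin n) ℝ} (hA : ErgStoch A) :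
    0 ≤ ergCoeff A := by
  have h : sInf {x : ℝ | ∃ i j : Fin n, x = ∑ k, min (A i k) (A j k)} ≤ 1 := by
    have := csInf_le (ergSet_bddBelow hA) ⟨⟨0, hn⟩, ⟨0, hn⟩, rfl⟩
    simpa [min_self, hA.2 ⟨0, hn⟩] using this
  simpa [ergCoeff] using h

lemma erg_le {A : Matrix (Fin n) (Fin n) ℝ} (hA : ErgStoch A) (i j : Fin n) :
    1 - ∑ k, min (A i k) (A j k) ≤ ergCoeff A := by
  have := csInf_le (ergSet_bddBelow hA) (⟨i, j, rfl⟩ :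
    (∑ k, min (A i k) (A j k)) ∈ {x : ℝ | ∃ i j : Fin n, x = ∑ k, min (A i k) (A j k)})
  simp only [ergCoeff]; linarith

lemma abs_eq_add_sub_two_min (a b : ℝ) : |a - b| = a + b - 2 * min a b := by
  rcases le_total a b with h | h <;> rw [abs_sub_comm] <;>
    simp [abs_of_nonneg, abs_of_nonpos, min_eq_left, min_eq_right, h, sub_nonneg, sub_nonpos] <;> ring

lemma key (hn : 1 ≤ n) {B : Matrix (Fin n) (Fin n) ℝ} (hB : ErgStoch B)
    (v : Fin n → ℝ) (hv : ∑ i, v i = 0) :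
    ∑ k, |∑ i, v i * B i k| ≤ ergCoeff B * ∑ k, |v k| := by
  haveI : Nonempty (Fin n) := ⟨⟨0, hn⟩⟩
  set s : Fin n → ℝ := fun k => if 0 ≤ ∑ i, v i * B i k then 1 else -1 with hs
  have habs : ∀ k, |∑ i, v i * B i k| = s k * ∑ i, v i * B i k := by
    intro k
    by_cases h : 0 ≤ ∑ i, v i * B i k
    · simp [hs, h, abs_of_nonneg h]
    · simp [hs, h, abs_of_neg (lt_of_not_ge h)]
  set c : Fin n → ℝ := fun i => ∑ k, s k * B i k with hc
  have hsum : ∑ k, |∑ i, v i * B i k| = ∑ i, v i * c i := by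
    simp only [habs, hc, Finset.mul_sum, Finset.sum_mul]
    rw [Finset.sum_comm]
    congr 1; ext i; congr 1; ext k; ring
  -- positive/negative parts
  set vp : Fin n → ℝ := fun i => max (v i) 0
  set vm : Fin n → ℝ := fun i => max (-v i) 0
  have hvpm : ∀ i, v i = vp i - vm i := by
    intro i; simp only [vp, vm]
    rcases le_total 0 (v i) with h | h
    · rw [max_eq_left h, max_eq_right (neg_nonpos.mpr h)]; ring
    · rw [max_eq_right h, max_eq_left (neg_nonneg.mpr h)]; ring
  have habsv : ∀ i, |v i| = vp i + vm i := by
    intro i; simp only [vp, vm]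
    rcases le_total 0 (v i) with h | h
    · rw [abs_of_nonneg h, max_eq_left h, max_eq_right (neg_nonpos.mpr h)]; ring
    · rw [abs_of_nonpos h, max_eq_right h, max_eq_left (neg_nonneg.mpr h)]; ring
  have hvp0 : ∀ i, 0 ≤ vp i := fun i => le_max_right _ _
  have hvm0 : ∀ i, 0 ≤ vm i := fun i => le_max_right _ _
  have hpeqm : ∑ i, vp i = ∑ i, vm i := by
    have : ∑ i, (vp i - vm i) = 0 := by
      rw [← hv]; congr 1; ext i; rw [hvpm i]
    rw [Finset.sum_sub_distrib] at this; linarith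
  have hnorm : ∑ k, |v k| = 2 * ∑ i, vp i := by
    simp only [habsv, Finset.sum_add_distrib, hpeqm]; ring
  -- sup and inf of c
  obtain ⟨i0, -, hi0⟩ := Finset.exists_max_image Finset.univ c ⟨⟨0, hn⟩, Finset.mem_univ _⟩
  obtain ⟨j0, -, hj0⟩ := Finset.exists_min_image Finset.univ c ⟨⟨0, hn⟩, Finset.mem_univ _⟩
  have hMm : c i0 - c j0 ≤ 2 * ergCoeff B := by
    have h1 : c i0 - c j0 = ∑ k, s k * (B i0 k - B j0 k) := by
      simp only [hc, ← Finset.sum_sub_distrib]; congr 1; ext k; ring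
    have h2 : ∑ k, s k * (B i0 k - B j0 k) ≤ ∑ k, |B i0 k - B j0 k| := by
      refine Finset.sum_le_sum fun k _ => ?_
      calc s k * (B i0 k - B j0 k) ≤ |s k * (B i0 k - B j0 k)| := le_abs_self _
        _ = |B i0 k - B j0 k| := by
            rw [abs_mul]; by_cases h : 0 ≤ ∑ i, v i * B i k <;> simp [hs, h]
    have h3 : ∑ k, |B i0 k - B j0 k| = 2 - 2 * ∑ k, min (B i0 k) (B j0 k) := by
      simp only [abs_eq_add_sub_two_min, Finset.sum_sub_distrib, Finset.sum_add_distrib,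
        hB.2, ← Finset.mul_sum]; ring
    have h4 := erg_le hB i0 j0
    linarith
  have hbound : ∑ i, v i * c i ≤ (c i0 - c j0) * ∑ i, vp i := by
    have : ∑ i, v i * c i = ∑ i, vp i * c i - ∑ i, vm i * c i := by
      rw [← Finset.sum_sub_distrib]; congr 1; ext i; rw [hvpm i]; ring
    rw [this]
    have h1 : ∑ i, vp i * c i ≤ ∑ i, vp i * c i0 :=
      Finset.sum_le_sum fun i _ => mul_le_mul_of_nonneg_left (hi0 i (Finset.mem_univ _)) (hvp0 i)
    have h2 : ∑ i, vm i * c j0 ≤ ∑ i, vm i * c i :=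
      Finset.sum_le_sum fun i _ => mul_le_mul_of_nonneg_left (hj0 i (Finset.mem_univ _)) (hvm0 i)
    have h3 : ∑ i, vp i * c i0 = c i0 * ∑ i, vp i := by rw [Finset.mul_sum]; congr 1; ext i; ring
    have h4 : ∑ i, vm i * c j0 = c j0 * ∑ i, vm i := by rw [Finset.mul_sum]; congr 1; ext i; ring
    rw [← hpeqm] at h4
    nlinarith [h1, h2]
  have hvpnn : 0 ≤ ∑ i, vp i := Finset.sum_nonneg fun i _ => hvp0 i
  calc ∑ k, |∑ i, v i * B i k| = ∑ i, v i * c i := hsum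
    _ ≤ (c i0 - c j0) * ∑ i, vp i := hbound
    _ ≤ (2 * ergCoeff B) * ∑ i, vp i := mul_le_mul_of_nonneg_right hMm hvpnn
    _ = ergCoeff B * ∑ k, |v k| := by rw [hnorm]; ring

lemma stoch_mul {A B : Matrix (Fin n) (Fin n) ℝ} (hA : ErgStoch A) (hB : ErgStoch B) :
    ErgStoch (A * B) := by
  constructor
  · intro i j
    rw [Matrix.mul_apply]
    exact Finset.sum_nonneg fun k _ => mul_nonneg (hA.1 i k) (hB.1 k j)
  · intro i
    simp only [Matrix.mul_apply]
    rw [Finset.sum_comm]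
    calc ∑ k, ∑ j, A i k * B k j = ∑ k, A i k * ∑ j, B k j := by
          simp [Finset.mul_sum]
      _ = 1 := by simp [hB.2, hA.2 i]

lemma erg_mul (hn : 1 ≤ n) {A B : Matrix (Fin n) (Fin n) ℝ} (hA : ErgStoch A) (hB : ErgStoch B) :
    ergCoeff (A * B) ≤ ergCoeff A * ergCoeff B := by
  have hAB := stoch_mul hA hB
  have h : ∀ i j : Fin n, 1 - ergCoeff A * ergCoeff B ≤
      ∑ k, min ((A * B) i k) ((A * B) j k) := by
    intro i j
    set v : Fin n → ℝ := fun l => A i l - A j l with hv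
    have hv0 : ∑ l, v l = 0 := by
      simp [hv, Finset.sum_sub_distrib, hA.2 i, hA.2 j]
    have hdiff : ∀ k, (A * B) i k - (A * B) j k = ∑ l, v l * B l k := by
      intro k; simp [Matrix.mul_apply, hv, Finset.sum_sub_distrib, sub_mul]
    have hmin : ∑ k, min ((A * B) i k) ((A * B) j k)
        = 1 - (1/2) * ∑ k, |∑ l, v l * B l k| := by
      have : ∀ k, min ((A * B) i k) ((A * B) j k)
          = ((A * B) i k + (A * B) j k - |(A * B) i k - (A * B) j k|) / 2 := by
        intro k; rw [abs_eq_add_sub_two_min]; ring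
      simp only [this, hdiff]
      rw [← Finset.sum_div, Finset.sum_sub_distrib, Finset.sum_add_distrib,
        hAB.2 i, hAB.2 j]
      ring
    have hnv : ∑ k, |v k| ≤ 2 * ergCoeff A := by
      have h3 : ∑ k, |A i k - A j k| = 2 - 2 * ∑ k, min (A i k) (A j k) := by
        simp only [abs_eq_add_sub_two_min, Finset.sum_sub_distrib, Finset.sum_add_distrib,
          hA.2, ← Finset.mul_sum]; ring
      have h4 := erg_le hA i j
      simp only [hv]; rw [h3]; linarith
    have hk := key hn hB v hv0
    have hergB := erg_nonneg hn hB
    rw [hmin]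
    nlinarith
  have : 1 - ergCoeff A * ergCoeff B ≤
      sInf {x : ℝ | ∃ i j : Fin n, x = ∑ k, min ((A*B) i k) ((A*B) j k)} := by
    haveI : Nonempty (Fin n) := ⟨⟨0, hn⟩⟩
    refine le_csInf ⟨_, Classical.arbitrary (Fin n), Classical.arbitrary (Fin n), rfl⟩ ?_
    rintro x ⟨i, j, rfl⟩
    exact h i j
  show 1 - sInf {x : ℝ | ∃ i j : Fin n, x = ∑ k, min ((A*B) i k) ((A*B) j k)}
    ≤ ergCoeff A * ergCoeff B
  linarith

end lemmas

/-- If `τ(A i) ≤ 1 - δ i` with `0 ≤ δ i ≤ 1` and `∑ δ i = ∞`, then the coefficients of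
ergodicity of the backward products `A i ⋯ A 1 A 0` converge to zero. -/
theorem stmt12 {n : ℕ} (hn : 1 ≤ n) (A : ℕ → Matrix (Fin n) (Fin n) ℝ)
    (hnonneg : ∀ t i j, 0 ≤ A t i j) (hrowsum : ∀ t i, ∑ j, A t i j = 1)
    (δ : ℕ → ℝ) (hδ0 : ∀ i, 0 ≤ δ i) (hδ1 : ∀ i, δ i ≤ 1)
    (hτ : ∀ i, ergCoeff (A i) ≤ 1 - δ i)
    (hdiv : Tendsto (fun m => ∑ i ∈ Finset.range m, δ i) atTop atTop) :
    Tendsto (fun i => ergCoeff (((List.range (i + 1)).map A).reverse.prod))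
      atTop (𝓝 0) := by
  set P : ℕ → Matrix (Fin n) (Fin n) ℝ :=
    fun i => ((List.range (i + 1)).map A).reverse.prod with hP
  have hstochA : ∀ t, ErgStoch (A t) := fun t => ⟨hnonneg t, hrowsum t⟩
  have hP0 : P 0 = A 0 := by simp [hP, List.range_succ]
  have hPsucc : ∀ i, P (i + 1) = A (i + 1) * P i := by
    intro i
    simp [hP, List.range_succ]
  have hstochP : ∀ i, ErgStoch (P i) := by
    intro i
    induction i with
    | zero => rw [hP0]; exact hstochA 0
    | succ i ih => rw [hPsucc]; exact stoch_mul (hstochA (i+1)) ih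
  have hbound : ∀ i, ergCoeff (P i) ≤ ∏ t ∈ Finset.range (i + 1), (1 - δ t) := by
    intro i
    induction i with
    | zero => simpa [hP0] using hτ 0
    | succ i ih =>
      rw [hPsucc, Finset.prod_range_succ]
      calc ergCoeff (A (i+1) * P i) ≤ ergCoeff (A (i+1)) * ergCoeff (P i) :=
            erg_mul hn (hstochA (i+1)) (hstochP i)
        _ ≤ (1 - δ (i+1)) * (∏ t ∈ Finset.range (i+1), (1 - δ t)) := by
            apply mul_le_mul (hτ (i+1)) ih (erg_nonneg hn (hstochP i))
            linarith [hδ1 (i+1)]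
        _ = _ := by ring
  have hexp : ∀ i, ∏ t ∈ Finset.range (i + 1), (1 - δ t)
      ≤ Real.exp (-(∑ t ∈ Finset.range (i + 1), δ t)) := by
    intro i
    calc ∏ t ∈ Finset.range (i + 1), (1 - δ t)
        ≤ ∏ t ∈ Finset.range (i + 1), Real.exp (-δ t) := by
          refine Finset.prod_le_prod (fun t _ => by linarith [hδ1 t]) fun t _ => ?_
          have := Real.add_one_le_exp (-δ t)
          linarith
      _ = Real.exp (∑ t ∈ Finset.range (i + 1), -δ t) := (Real.exp_sum _ _).symm
      _ = Real.exp (-(∑ t ∈ Finset.range (i + 1), δ t)) := by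
          rw [← Finset.sum_neg_distrib]
  have hexp0 : Tendsto (fun i => Real.exp (-(∑ t ∈ Finset.range (i + 1), δ t)))
      atTop (𝓝 0) := by
    have h1 : Tendsto (fun i : ℕ => ∑ t ∈ Finset.range (i + 1), δ t) atTop atTop :=
      hdiv.comp (tendsto_add_atTop_nat 1)
    exact Real.tendsto_exp_neg_atTop_nhds_zero.comp h1
  refine squeeze_zero (fun i => erg_nonneg hn (hstochP i)) (fun i => ?_) hexp0
  exact le_trans (hbound i) (hexp i)
end

section
/- Let (A_i)_{i∈ℕ} be a sequence of n×n row-stochastic matrices and (δ_i)_{i∈ℕ} real numbers with δ_i > 0, such that every entry of A_i is at least δ_i (i.e., all A_i are entrywise positive with min entry ≥ δ_i) and ∑_{i=0}^∞ δ_i = ∞. Then the backward products A_i ⋯ A_1 A_0 converge as i → ∞ to a consensus matrix, i.e., a row-stochastic matrix all of whose rows are equal. -/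
open Filter Topology

/-- If every entry of the row-stochastic matrix `A i` is at least `δ i > 0` and
`∑ δ i = ∞`, then the backward products `A i ⋯ A 1 A 0` converge to a consensus matrix
(a row-stochastic matrix all of whose rows are equal). -/
theorem stmt13 {n : ℕ} (hn : 1 ≤ n) (A : ℕ → Matrix (Fin n) (Fin n) ℝ)
    (hrowsum : ∀ t i, ∑ j, A t i j = 1)
    (δ : ℕ → ℝ) (hδpos : ∀ i, 0 < δ i)
    (hentry : ∀ t i j, δ t ≤ A t i j)
    (hdiv : Tendsto (fun m => ∑ i ∈ Finset.range m, δ i) atTop atTop) :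
    ∃ K : Matrix (Fin n) (Fin n) ℝ,
      (∀ i j, 0 ≤ K i j) ∧ (∀ i, ∑ j, K i j = 1) ∧ (∀ i j : Fin n, K i = K j) ∧
      Tendsto (fun i => ((List.range (i + 1)).map A).reverse.prod) atTop (𝓝 K) := by
  have hne : Nonempty (Fin n) := Fin.pos_iff_nonempty.mp hn
  have hA0 : ∀ t k l, (0:ℝ) ≤ A t k l := fun t k l => (hδpos t).le.trans (hentry t k l)
  set P : ℕ → Matrix (Fin n) (Fin n) ℝ := fun i => ((List.range (i + 1)).map A).reverse.prod
    with hP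
  have hP0 : P 0 = A 0 := by simp [hP, List.range_succ]
  have hPsucc : ∀ i, P (i + 1) = A (i + 1) * P i := by
    intro i
    simp [hP, List.range_succ]
  have hPnn : ∀ i k l, 0 ≤ P i k l := by
    intro i
    induction i with
    | zero => intro k l; rw [hP0]; exact hA0 0 k l
    | succ i ih =>
      intro k l
      rw [hPsucc, Matrix.mul_apply]
      exact Finset.sum_nonneg fun m _ => mul_nonneg (hA0 _ _ _) (ih _ _)
  have hProw : ∀ i k, ∑ l, P i k l = 1 := by
    intro i
    induction i with
    | zero => intro k; rw [hP0]; exact hrowsum 0 k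
    | succ i ih =>
      intro k
      rw [hPsucc]
      simp only [Matrix.mul_apply]
      rw [Finset.sum_comm]
      calc ∑ m, ∑ l, A (i+1) k m * P i m l
          = ∑ m, A (i+1) k m * ∑ l, P i m l := by simp [Finset.mul_sum]
        _ = 1 := by simp [ih, hrowsum]
  have hPle1 : ∀ i k l, P i k l ≤ 1 := by
    intro i k l
    rw [← hProw i k]
    exact Finset.single_le_sum (fun l _ => hPnn i k l) (Finset.mem_univ l)
  have hδle1 : ∀ t, δ t ≤ 1 := by
    intro t
    obtain ⟨k⟩ := hne
    calc δ t ≤ A t k k := hentry t k k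
      _ ≤ ∑ l, A t k l := Finset.single_le_sum (fun l _ => hA0 t k l) (Finset.mem_univ k)
      _ = 1 := hrowsum t k
  -- the product over range i of (1 - δ (t+1)) tends to 0
  have hprod0 : Tendsto (fun i => ∏ t ∈ Finset.range i, (1 - δ (t+1))) atTop (𝓝 0) := by
    have hS : Tendsto (fun i => ∑ t ∈ Finset.range i, δ (t+1)) atTop atTop := by
      have h1 : Tendsto (fun i => ∑ t ∈ Finset.range (i+1), δ t + (-δ 0)) atTop atTop :=
        Filter.tendsto_atTop_add_const_right atTop (-δ 0)
          (hdiv.comp (tendsto_add_atTop_nat 1))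
      refine h1.congr fun i => ?_
      rw [Finset.sum_range_succ']
      ring
    have hub : ∀ i, ∏ t ∈ Finset.range i, (1 - δ (t+1))
        ≤ Real.exp (-(∑ t ∈ Finset.range i, δ (t+1))) := by
      intro i
      rw [← Finset.sum_neg_distrib, Real.exp_sum]
      refine Finset.prod_le_prod (fun t _ => by linarith [hδle1 (t+1)]) fun t _ => ?_
      linarith [Real.add_one_le_exp (-δ (t+1))]
    have hlb : ∀ i, 0 ≤ ∏ t ∈ Finset.range i, (1 - δ (t+1)) :=
      fun i => Finset.prod_nonneg fun t _ => by linarith [hδle1 (t+1)]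
    have hexp : Tendsto (fun i => Real.exp (-(∑ t ∈ Finset.range i, δ (t+1)))) atTop (𝓝 0) :=
      Real.tendsto_exp_atBot.comp (tendsto_neg_atTop_atBot.comp hS)
    exact squeeze_zero hlb hub hexp
  -- per-column convergence
  have key : ∀ j : Fin n, ∃ c : ℝ, ∀ k : Fin n, Tendsto (fun i => P i k j) atTop (𝓝 c) := by
    intro j
    set m : ℕ → ℝ := fun i => Finset.univ.inf' Finset.univ_nonempty (fun k => P i k j) with hm
    set M : ℕ → ℝ := fun i => Finset.univ.sup' Finset.univ_nonempty (fun k => P i k j) with hM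
    have hmle : ∀ i k, m i ≤ P i k j := fun i k => Finset.inf'_le _ (Finset.mem_univ k)
    have hMge : ∀ i k, P i k j ≤ M i := fun i k => Finset.le_sup' (fun k => P i k j) (Finset.mem_univ k)
    have hmM : ∀ i, m i ≤ M i :=
      fun i => (hmle i (Classical.arbitrary _)).trans (hMge i _)
    have hstep_lo : ∀ i k, m i ≤ P (i+1) k j := by
      intro i k
      rw [hPsucc, Matrix.mul_apply]
      calc m i = ∑ l, A (i+1) k l * m i := by rw [← Finset.sum_mul, hrowsum, one_mul]
        _ ≤ ∑ l, A (i+1) k l * P i l j :=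
            Finset.sum_le_sum fun l _ => mul_le_mul_of_nonneg_left (hmle i l) (hA0 _ _ _)
    have hstep_hi : ∀ i k, P (i+1) k j ≤ M i - δ (i+1) * (M i - m i) := by
      intro i k
      obtain ⟨l0, -, hl0⟩ := Finset.exists_mem_eq_inf' (Finset.univ_nonempty) (fun k => P i k j)
      rw [hPsucc, Matrix.mul_apply]
      have h1 : ∑ l, A (i+1) k l * P i l j
          = A (i+1) k l0 * P i l0 j + ∑ l ∈ Finset.univ.erase l0, A (i+1) k l * P i l j :=
        (Finset.add_sum_erase _ _ (Finset.mem_univ l0)).symm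
      have h2 : ∑ l ∈ Finset.univ.erase l0, A (i+1) k l * P i l j
          ≤ ∑ l ∈ Finset.univ.erase l0, A (i+1) k l * M i :=
        Finset.sum_le_sum fun l _ => mul_le_mul_of_nonneg_left (hMge i l) (hA0 _ _ _)
      have h3 : ∑ l ∈ Finset.univ.erase l0, A (i+1) k l = 1 - A (i+1) k l0 := by
        rw [Finset.sum_erase_eq_sub (Finset.mem_univ l0), hrowsum]
      have h4 : P i l0 j = m i := hl0.symm
      have h5 := hentry (i+1) k l0
      have h6 := hmM i
      rw [h1, h4]
      rw [← Finset.sum_mul, h3] at h2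
      have h7 : δ (i+1) * (M i - m i) ≤ A (i+1) k l0 * (M i - m i) :=
        mul_le_mul_of_nonneg_right h5 (by linarith)
      linarith
    have hm_mono : Monotone m :=
      monotone_nat_of_le_succ fun i =>
        Finset.le_inf' _ _ fun k _ => hstep_lo i k
    have hM_step : ∀ i, M (i+1) ≤ M i - δ (i+1) * (M i - m i) :=
      fun i => Finset.sup'_le _ _ fun k _ => hstep_hi i k
    have hd : ∀ i, M (i+1) - m (i+1) ≤ (1 - δ (i+1)) * (M i - m i) := by
      intro i
      have h1 := hM_step i
      have h2 : m i ≤ m (i+1) := hm_mono (Nat.le_succ i)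
      nlinarith
    have hdle : ∀ i, M i - m i ≤ (∏ t ∈ Finset.range i, (1 - δ (t+1))) * (M 0 - m 0) := by
      intro i
      induction i with
      | zero => simp
      | succ i ih =>
        have h1 := hd i
        have h2 : (0:ℝ) ≤ 1 - δ (i+1) := by linarith [hδle1 (i+1)]
        calc M (i+1) - m (i+1) ≤ (1 - δ (i+1)) * (M i - m i) := h1
          _ ≤ (1 - δ (i+1)) * ((∏ t ∈ Finset.range i, (1 - δ (t+1))) * (M 0 - m 0)) :=
              mul_le_mul_of_nonneg_left ih h2
          _ = (∏ t ∈ Finset.range (i+1), (1 - δ (t+1))) * (M 0 - m 0) := by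
              rw [Finset.prod_range_succ]; ring
    have hd0 : Tendsto (fun i => M i - m i) atTop (𝓝 0) := by
      have hub := hprod0.mul_const (M 0 - m 0)
      rw [zero_mul] at hub
      exact squeeze_zero (fun i => by linarith [hmM i]) hdle hub
    have hmbdd : BddAbove (Set.range m) := by
      refine ⟨1, ?_⟩
      rintro x ⟨i, rfl⟩
      exact (hmle i (Classical.arbitrary _)).trans (hPle1 i _ j)
    have hmc : Tendsto m atTop (𝓝 (⨆ i, m i)) := tendsto_atTop_ciSup hm_mono hmbdd
    have hMc : Tendsto M atTop (𝓝 (⨆ i, m i)) := by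
      have := hmc.add hd0
      rw [add_zero] at this
      exact this.congr fun i => by ring
    exact ⟨⨆ i, m i, fun k =>
      tendsto_of_tendsto_of_tendsto_of_le_of_le hmc hMc (fun i => hmle i k)
        (fun i => hMge i k)⟩
  choose c hc using key
  refine ⟨Matrix.of (fun _ j => c j), ?_, ?_, ?_, ?_⟩
  · intro i j
    exact ge_of_tendsto' (hc j i) fun t => hPnn t i j
  · intro k
    have h1 : Tendsto (fun i => ∑ j, P i k j) atTop (𝓝 (∑ j, c j)) :=
      tendsto_finset_sum _ fun j _ => hc j k
    have h2 : Tendsto (fun i => ∑ j, P i k j) atTop (𝓝 1) := by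
      simp only [hProw]
      exact (tendsto_const_nhds : Tendsto (fun _ : ℕ => (1:ℝ)) atTop (𝓝 1))
    exact tendsto_nhds_unique h1 h2
  · intro i j
    rfl
  · refine tendsto_pi_nhds.mpr ?_
    intro k
    rw [tendsto_pi_nhds]
    intro j
    exact hc j k
end

section
/- Let (A(t))_{t∈ℕ} be a sequence of n×n row-stochastic matrices with min⁺ A(t) ≥ δ for all t, where 0 < δ < 1, let a > 0 be real, and let 0 < t_0 < t_1 < ⋯ be a strictly increasing sequence of natural numbers whose gaps grow at most doubly-logarithmically: t_{i+1} − t_i ≤ a·log(log(i)) for all i ≥ 3. Then ∑_{i=3}^∞ min⁺ A(t_{i+1}, t_i) = ∞; that is, the divergence hypothesis of the convergence theorem is satisfied with δ_i := δ^{t_{i+1}-t_i}. -/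
set_option maxHeartbeats 1000000


open Filter

/-- The positive minimum `min⁺ A`: the smallest strictly positive entry of `A`. -/
noncomputable def minPos {n : ℕ} (A : Matrix (Fin n) (Fin n) ℝ) : ℝ :=
  sInf {x : ℝ | 0 < x ∧ ∃ i j : Fin n, A i j = x}

lemma backAcc_succ' {n : ℕ} (A : ℕ → Matrix (Fin n) (Fin n) ℝ) (s k : ℕ) :
    backAcc A s (s + k + 1) = A (s + k) * backAcc A s (s + k) := by
  unfold backAcc
  have h1 : s + k + 1 - s = k + 1 := by omega
  have h2 : s + k - s = k := by omega
  rw [h1, h2, List.range'_concat]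
  simp [List.reverse_append]

lemma mul_entry_lb {n : ℕ} (B C : Matrix (Fin n) (Fin n) ℝ) {β γ : ℝ}
    (hB0 : ∀ i j, 0 ≤ B i j) (hC0 : ∀ i j, 0 ≤ C i j)
    (hB : ∀ i j, B i j ≠ 0 → β ≤ B i j) (hC : ∀ i j, C i j ≠ 0 → γ ≤ C i j)
    (hγ : 0 ≤ γ) :
    ∀ i k, (B * C) i k ≠ 0 → β * γ ≤ (B * C) i k := by
  intro i k hne
  rw [Matrix.mul_apply] at hne ⊢
  obtain ⟨j, hj⟩ : ∃ j, B i j * C j k ≠ 0 := by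
    by_contra h
    push_neg at h
    exact hne (Finset.sum_eq_zero fun j _ => h j)
  have hBj := hB i j (fun h => hj (by rw [h, zero_mul]))
  have hCj := hC j k (fun h => hj (by rw [h, mul_zero]))
  calc β * γ ≤ B i j * C j k := mul_le_mul hBj hCj hγ (hB0 i j)
    _ ≤ ∑ j, B i j * C j k :=
      Finset.single_le_sum (fun j _ => mul_nonneg (hB0 i j) (hC0 j k)) (Finset.mem_univ j)

lemma backAcc_prop {n : ℕ} (A : ℕ → Matrix (Fin n) (Fin n) ℝ)
    (hnonneg : ∀ t i j, 0 ≤ A t i j) (hrowsum : ∀ t i, ∑ j, A t i j = 1)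
    {δ : ℝ} (hδ0 : 0 < δ)
    (hent : ∀ u i j, A u i j ≠ 0 → δ ≤ A u i j) (s k : ℕ) :
    (∀ i j, 0 ≤ backAcc A s (s + k) i j) ∧ (∀ i, ∑ j, backAcc A s (s + k) i j = 1) ∧
    (∀ i j, backAcc A s (s + k) i j ≠ 0 → δ ^ k ≤ backAcc A s (s + k) i j) := by
  induction k with
  | zero =>
    have hb : backAcc A s (s + 0) = 1 := by
      unfold backAcc; simp
    rw [hb]
    refine ⟨fun i j => ?_, fun i => ?_, fun i j h => ?_⟩
    · rw [Matrix.one_apply]; positivity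
    · simp [Matrix.one_apply]
    · rw [Matrix.one_apply] at h ⊢
      by_cases hij : i = j <;> simp [hij] at h ⊢
  | succ k ih =>
    obtain ⟨ih0, ih1, ih2⟩ := ih
    have hb : backAcc A s (s + (k + 1)) = A (s + k) * backAcc A s (s + k) := by
      rw [← backAcc_succ' A s k]; ring_nf
    rw [hb]
    refine ⟨fun i j => ?_, fun i => ?_, fun i j h => ?_⟩
    · rw [Matrix.mul_apply]
      exact Finset.sum_nonneg fun l _ => mul_nonneg (hnonneg _ i l) (ih0 l j)
    · simp only [Matrix.mul_apply]
      rw [Finset.sum_comm]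
      calc ∑ l, ∑ j, A (s + k) i l * backAcc A s (s + k) l j
          = ∑ l, A (s + k) i l * ∑ j, backAcc A s (s + k) l j := by
            simp [Finset.mul_sum]
        _ = 1 := by simp [ih1, hrowsum]
    · have := mul_entry_lb (A (s + k)) (backAcc A s (s + k)) (hnonneg _) ih0
        (hent _) ih2 (by positivity) i j h
      calc δ ^ (k + 1) = δ * δ ^ k := by ring
        _ ≤ _ := this

/-- Doubly-logarithmically growing intercommunication intervals: if `min⁺ A(t) ≥ δ` for
all `t` and the gaps satisfy `t (i+1) - t i ≤ a·log(log i)` for all `i ≥ 3`, then the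
series `∑_{i=3}^∞ min⁺ A(t (i+1), t i)` diverges to infinity. -/
theorem stmt18 {n : ℕ} (hn : 1 ≤ n) (A : ℕ → Matrix (Fin n) (Fin n) ℝ)
    (hnonneg : ∀ t i j, 0 ≤ A t i j) (hrowsum : ∀ t i, ∑ j, A t i j = 1)
    (δ : ℝ) (hδ0 : 0 < δ) (hδ1 : δ < 1) (hmin : ∀ t, δ ≤ minPos (A t))
    (a : ℝ) (ha : 0 < a)
    (t : ℕ → ℕ) (ht : StrictMono t) (ht0 : 0 < t 0)
    (hgap : ∀ i : ℕ, 3 ≤ i → (t (i + 1) - t i : ℝ) ≤ a * Real.log (Real.log i)) :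
    Tendsto (fun m => ∑ i ∈ Finset.Ico 3 m, minPos (backAcc A (t i) (t (i + 1))))
      atTop atTop := by
  -- every positive entry of `A u` is at least `δ`
  have hent : ∀ u i j, A u i j ≠ 0 → δ ≤ A u i j := by
    intro u i j h
    have hpos : 0 < A u i j := lt_of_le_of_ne (hnonneg u i j) (Ne.symm h)
    have hle : minPos (A u) ≤ A u i j :=
      csInf_le ⟨0, fun x hx => hx.1.le⟩ ⟨hpos, i, j, rfl⟩
    exact (hmin u).trans hle
  set f : ℕ → ℝ := fun i => minPos (backAcc A (t i) (t (i + 1))) with hf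
  -- `minPos` bound for the accumulations
  have hkey : ∀ i : ℕ, δ ^ (t (i + 1) - t i) ≤ f i := by
    intro i
    have hle : t i ≤ t (i + 1) := (ht (Nat.lt_succ_self i)).le
    set k := t (i + 1) - t i with hk
    have hsk : t i + k = t (i + 1) := by omega
    obtain ⟨h0, h1, h2⟩ := backAcc_prop A hnonneg hrowsum hδ0 hent (t i) k
    rw [hsk] at h0 h1 h2
    apply le_csInf
    · obtain ⟨j, _, hj⟩ := Finset.exists_ne_zero_of_sum_ne_zero
        (by rw [h1 ⟨0, hn⟩]; norm_num :
          ∑ j, backAcc A (t i) (t (i + 1)) ⟨0, hn⟩ j ≠ 0)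
      exact ⟨_, lt_of_le_of_ne (h0 _ j) (Ne.symm hj), ⟨0, hn⟩, j, rfl⟩
    · rintro x ⟨hx, i', j', rfl⟩
      exact h2 i' j' (ne_of_gt hx)
  have hf0 : ∀ i, 0 ≤ f i := fun i => Real.sInf_nonneg fun x hx => hx.1.le
  -- rpow lower bound for `i ≥ 3`
  have hlow : ∀ i : ℕ, 3 ≤ i → δ ^ (a * Real.log (Real.log i)) ≤ f i := by
    intro i hi
    have hle : t i ≤ t (i + 1) := (ht (Nat.lt_succ_self i)).le
    have hcast : ((t (i + 1) - t i : ℕ) : ℝ) = (t (i + 1) : ℝ) - t i := by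
      push_cast [Nat.cast_sub hle]; ring
    have h1 : δ ^ (a * Real.log (Real.log i)) ≤ δ ^ (((t (i + 1) - t i : ℕ) : ℝ)) :=
      Real.rpow_le_rpow_of_exponent_ge hδ0 hδ1.le (by rw [hcast]; exact hgap i hi)
    rw [Real.rpow_natCast] at h1
    exact h1.trans (hkey i)
  -- eventual lower bound `1/i ≤ δ ^ (a * log (log i))`
  have hlogδ : Real.log δ < 0 := Real.log_neg hδ0 hδ1
  set c : ℝ := a * (-Real.log δ) with hc
  have hc0 : 0 < c := mul_pos ha (by linarith)
  have hev1 : ∀ᶠ y : ℝ in atTop, ‖Real.log y‖ ≤ (1 / c) * ‖y‖ :=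
    Real.isLittleO_log_id_atTop.def (by positivity)
  have htlog : Tendsto (fun i : ℕ => Real.log i) atTop atTop :=
    Real.tendsto_log_atTop.comp tendsto_natCast_atTop_atTop
  have hev2 : ∀ᶠ i : ℕ in atTop, ‖Real.log (Real.log i)‖ ≤ (1 / c) * ‖Real.log i‖ :=
    htlog.eventually hev1
  have hev3 : ∀ᶠ i : ℕ in atTop, (1 : ℝ) ≤ Real.log i := htlog.eventually_ge_atTop 1
  have hev : ∀ᶠ i : ℕ in atTop, 1 / (i : ℝ) ≤ δ ^ (a * Real.log (Real.log i)) := by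
    filter_upwards [hev2, hev3, eventually_ge_atTop 1] with i h2 h3 h4
    have hipos : (0 : ℝ) < i := by exact_mod_cast h4
    have hlogi : 0 < Real.log i := lt_of_lt_of_le one_pos h3
    have hll : Real.log (Real.log i) ≤ (1 / c) * Real.log i := by
      calc Real.log (Real.log i) ≤ ‖Real.log (Real.log i)‖ := le_abs_self _
        _ ≤ (1 / c) * ‖Real.log i‖ := h2
        _ = (1 / c) * Real.log i := by rw [Real.norm_eq_abs, abs_of_pos hlogi]
    have hexp : -Real.log i ≤ Real.log δ * (a * Real.log (Real.log i)) := by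
      have h5 : c * Real.log (Real.log i) ≤ Real.log i := by
        calc c * Real.log (Real.log i) ≤ c * ((1 / c) * Real.log i) := by
              exact mul_le_mul_of_nonneg_left hll hc0.le
          _ = Real.log i := by field_simp
      nlinarith [h5]
    calc 1 / (i : ℝ) = Real.exp (-Real.log i) := by
          rw [Real.exp_neg, Real.exp_log hipos, one_div]
      _ ≤ Real.exp (Real.log δ * (a * Real.log (Real.log i))) := Real.exp_le_exp.2 hexp
      _ = δ ^ (a * Real.log (Real.log i)) := (Real.rpow_def_of_pos hδ0 _).symm
  obtain ⟨N, hN⟩ := eventually_atTop.1 hev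
  -- not summable
  have hns : ¬ Summable f := by
    intro hs
    have h1 : Summable (fun i => f (i + (N + 3))) := (summable_nat_add_iff (N + 3)).2 hs
    have h2 : Summable (fun i : ℕ => 1 / ((i + (N + 3) : ℕ) : ℝ)) := by
      refine Summable.of_nonneg_of_le (fun i => by positivity) (fun i => ?_) h1
      have hi3 : 3 ≤ i + (N + 3) := by omega
      have hiN : N ≤ i + (N + 3) := by omega
      exact (hN _ hiN).trans (hlow _ hi3)
    have h3 : Summable (fun i : ℕ => 1 / (i : ℝ)) :=
      (summable_nat_add_iff (f := fun m : ℕ => 1 / (m : ℝ)) (N + 3)).1 h2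
    exact Real.not_summable_one_div_natCast h3
  have htr : Tendsto (fun m => ∑ i ∈ Finset.range m, f i) atTop atTop :=
    (not_summable_iff_tendsto_nat_atTop_of_nonneg hf0).1 hns
  have htr' : Tendsto (fun m => (∑ i ∈ Finset.range m, f i) +
      (-(∑ i ∈ Finset.range 3, f i))) atTop atTop :=
    tendsto_atTop_add_const_right atTop _ htr
  refine htr'.congr' ?_
  filter_upwards [eventually_ge_atTop 3] with m hm
  rw [Finset.sum_Ico_eq_sub _ hm, sub_eq_add_neg]
end
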